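/- arXiv:1112.5710 — 6 statements merged into one kernel-verified Lean document; each statement's English description precedes it below -/
import Mathlib

section
/- Let B be a Boolean algebra, {N_b : b ∈ B⁺} an independent family of subsets of ℕ (i.e., for any finite disjoint s, t ⊆ B⁺, the set ⋂_{b∈s} N_b \ ⋃_{b'∈t} N_{b'} is nonempty). In the countable product algebra C = B^ℕ define G_b(n) = b if n ∈ N_b and G_b(n) = 0 otherwise. For finite s, t ⊆ B⁺ let W(s,t) = ⋂_{b∈s} G_b \ ⋃_{b'∈t} G_{b'}. Then W(s,t) = 0 in C if and only if s ∩ t ≠ ∅ or ⋂_{b∈s} b = 0 in B. -/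
/-- In the product Boolean algebra `C = B^ℕ`, with `G b n = b` if `n ∈ N b`
and `⊥` otherwise (for an independent family `N` of subsets of `ℕ` indexed by nonzero
elements of `B`), and `W s t = (⋂_{b∈s} G b) \ (⋃_{b∈t} G b)`, we have `W s t = ⊥`
iff `s ∩ t ≠ ∅` or `⋂_{b∈s} b = ⊥`. -/
theorem stmt_0 {B : Type*} [BooleanAlgebra B] [DecidableEq B]
    (N : B → Set ℕ)
    (hindep : ∀ s t : Finset B, (↑s : Set B) ⊆ {b | b ≠ ⊥} → (↑t : Set B) ⊆ {b | b ≠ ⊥} →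
      Disjoint s t → ∃ n : ℕ, (∀ b ∈ s, n ∈ N b) ∧ (∀ b ∈ t, n ∉ N b))
    (G : B → (ℕ → B))
    (hG : ∀ b n, (n ∈ N b → G b n = b) ∧ (n ∉ N b → G b n = ⊥))
    (s t : Finset B) (hs : (↑s : Set B) ⊆ {b | b ≠ ⊥}) (ht : (↑t : Set B) ⊆ {b | b ≠ ⊥}) :
    (s.inf G \ t.sup G = (⊥ : ℕ → B)) ↔ ((s ∩ t).Nonempty ∨ s.inf id = ⊥) := by
  constructor
  · intro h
    by_contra hc
    push_neg at hc
    obtain ⟨h1, h2⟩ := hc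
    have hdisj : Disjoint s t := by
      rw [Finset.disjoint_iff_inter_eq_empty, ← Finset.not_nonempty_iff_eq_empty]
      exact Finset.not_nonempty_iff_eq_empty.mpr h1
    obtain ⟨n, hns, hnt⟩ := hindep s t hs ht hdisj
    have hinf : (s.inf G) n = s.inf id := by
      rw [Finset.inf_apply]
      exact Finset.inf_congr rfl (fun b hb => (hG b n).1 (hns b hb))
    have hsup : (t.sup G) n = ⊥ := by
      rw [Finset.sup_apply]
      exact (Finset.sup_eq_bot_iff _ _).mpr (fun b hb => (hG b n).2 (hnt b hb))
    have := congrFun h n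
    simp only [Pi.sdiff_apply, Pi.bot_apply, hinf, hsup, sdiff_bot] at this
    exact h2 this
  · intro h
    funext n
    simp only [Pi.sdiff_apply, Pi.bot_apply]
    rcases h with ⟨b, hb⟩ | h
    · rw [Finset.mem_inter] at hb
      have h1 : (s.inf G) n ≤ G b n := by
        rw [Finset.inf_apply]; exact Finset.inf_le hb.1
      have h2 : G b n ≤ (t.sup G) n := by
        rw [Finset.sup_apply]; exact Finset.le_sup (f := fun a => G a n) hb.2
      exact sdiff_eq_bot_iff.mpr (h1.trans h2)
    · have : (s.inf G) n = ⊥ := by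
        rw [Finset.inf_apply]
        refine le_bot_iff.mp (h ▸ ?_)
        exact Finset.inf_mono_fun (fun b hb => by
          rcases Classical.em (n ∈ N b) with hn | hn
          · exact le_of_eq ((hG b n).1 hn)
          · simp [(hG b n).2 hn])
      simp [this]
end

section
/- With the notation of the previous setting (G_b ∈ B^ℕ defined from an independent family {N_b : b ∈ B⁺}), for a finite set s ⊆ B⁺ the following are equivalent: (1) ⋂_{b∈s} b = 0; (2) J(s) := ⋂_{b∈s} G_b = 0; (3) W(s,t) = 0 for all finite t ⊆ B⁺ \ s; (4) W(s,t) = 0 for some finite t ⊆ B⁺ \ s. -/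
/-- With `G b ∈ B^ℕ` defined from an independent family `{N b : b ≠ ⊥}`,
for a finite `s ⊆ B⁺` the following are equivalent: (1) `⋂_{b∈s} b = ⊥`;
(2) `J(s) = ⋂_{b∈s} G b = ⊥`; (3) `W(s,t) = ⊥` for all finite `t ⊆ B⁺ \ s`;
(4) `W(s,t) = ⊥` for some finite `t ⊆ B⁺ \ s`. -/
theorem stmt_1 {B : Type*} [BooleanAlgebra B]
    (N : B → Set ℕ)
    (hindep : ∀ s t : Finset B, (↑s : Set B) ⊆ {b | b ≠ ⊥} → (↑t : Set B) ⊆ {b | b ≠ ⊥} →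
      Disjoint s t → ∃ n : ℕ, (∀ b ∈ s, n ∈ N b) ∧ (∀ b ∈ t, n ∉ N b))
    (G : B → (ℕ → B))
    (hG : ∀ b n, (n ∈ N b → G b n = b) ∧ (n ∉ N b → G b n = ⊥))
    (s : Finset B) (hs : (↑s : Set B) ⊆ {b | b ≠ ⊥}) :
    List.TFAE
      [ s.inf id = ⊥,
        s.inf G = (⊥ : ℕ → B),
        ∀ t : Finset B, (↑t : Set B) ⊆ {b | b ≠ ⊥} \ ↑s →
          s.inf G \ t.sup G = (⊥ : ℕ → B),
        ∃ t : Finset B, (↑t : Set B) ⊆ {b | b ≠ ⊥} \ ↑s ∧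
          s.inf G \ t.sup G = (⊥ : ℕ → B) ] := by

  tfae_have 1 → 2 := by
    intro h
    funext n
    have hle : s.inf G n ≤ s.inf id := by
      rw [Finset.inf_apply]
      refine Finset.inf_mono_fun ?_
      intro b hb
      rcases hG b n with ⟨h1, h2⟩
      by_cases hn : n ∈ N b
      · simp [h1 hn]
      · simp [h2 hn]
    simpa [h] using hle
  tfae_have 2 → 3 := by
    intro h t ht
    rw [h, bot_sdiff]
  tfae_have 3 → 4 := by
    intro h
    exact ⟨∅, by simp, h ∅ (by simp)⟩
  tfae_have 4 → 1 := by
    rintro ⟨t, ht, hW⟩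
    by_contra hne
    have hdisj : Disjoint s t := by
      rw [Finset.disjoint_right]
      intro a ha
      exact (ht ha).2
    have htb : (↑t : Set B) ⊆ {b | b ≠ ⊥} := fun b hb => (ht hb).1
    obtain ⟨n, hn1, hn2⟩ := hindep s t hs htb hdisj
    have h1 : s.inf G n = s.inf id := by
      rw [Finset.inf_apply]
      exact Finset.inf_congr rfl (fun b hb => (hG b n).1 (hn1 b hb))
    have h2 : t.sup G n = ⊥ := by
      rw [Finset.sup_apply]
      exact (Finset.sup_eq_bot_iff _ _).mpr (fun b hb => (hG b n).2 (hn2 b hb))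
    have := congrFun hW n
    rw [Pi.sdiff_apply, h1, h2, Pi.bot_apply, sdiff_bot] at this
    exact hne this
  tfae_finish
end

section
/- Every finitely additive probability measure on a subalgebra A of a Boolean algebra B extends to a finitely additive probability measure on B. -/
open Filter Topology

section PM
variable {B : Type*} [BooleanAlgebra B]

lemma split_eq (b u : B) : (u ⊓ b) ⊔ (u ⊓ bᶜ) = u := by
  rw [← inf_sup_left]; simp

lemma eq_of_split {b u v : B} (h1 : u ⊓ b = v ⊓ b) (h2 : u ⊓ bᶜ = v ⊓ bᶜ) : u = v := by
  rw [← split_eq b u, h1, h2, split_eq]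

lemma id1 (b s t : B) : ((s ⊓ b) ⊔ (t ⊓ bᶜ)) ⊓ b = s ⊓ b := by
  rw [inf_sup_right, inf_assoc, inf_assoc]; simp

lemma id2 (b s t : B) : ((s ⊓ b) ⊔ (t ⊓ bᶜ)) ⊓ bᶜ = t ⊓ bᶜ := by
  rw [inf_sup_right, inf_assoc, inf_assoc]; simp

lemma id4 (b s t : B) : ((s ⊓ b) ⊔ (t ⊓ bᶜ))ᶜ = (sᶜ ⊓ b) ⊔ (tᶜ ⊓ bᶜ) := by
  refine (IsCompl.of_eq ?_ ?_).compl_eq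
  · refine eq_of_split (b := b) ?_ ?_
    · rw [inf_assoc, id1, ← inf_assoc, inf_right_comm, id1]
      rw [inf_right_comm]; simp
    · rw [inf_assoc, id2, ← inf_assoc, inf_right_comm, id2]
      rw [inf_right_comm]; simp
  · refine eq_of_split (b := b) ?_ ?_
    · rw [inf_sup_right, id1, id1, ← inf_sup_right]; simp
    · rw [inf_sup_right, id2, id2, ← inf_sup_right]; simp

lemma id3 (b s t s' t' : B) :
    ((s ⊓ b) ⊔ (t ⊓ bᶜ)) ⊔ ((s' ⊓ b) ⊔ (t' ⊓ bᶜ)) = ((s ⊔ s') ⊓ b) ⊔ ((t ⊔ t') ⊓ bᶜ) := by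
  rw [sup_sup_sup_comm, ← inf_sup_right, ← inf_sup_right]

structure IsPM (S : Set B) (m : B → ℝ) : Prop where
  top_mem : ⊤ ∈ S
  compl_mem : ∀ x ∈ S, xᶜ ∈ S
  sup_mem : ∀ x ∈ S, ∀ y ∈ S, x ⊔ y ∈ S
  nonneg : ∀ x ∈ S, 0 ≤ m x
  map_top : m ⊤ = 1
  add : ∀ x ∈ S, ∀ y ∈ S, x ⊓ y = ⊥ → m (x ⊔ y) = m x + m y

namespace IsPM

variable {S : Set B} {m : B → ℝ}

lemma bot_mem (h : IsPM S m) : ⊥ ∈ S := by simpa using h.compl_mem ⊤ h.top_mem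

lemma inf_mem (h : IsPM S m) : ∀ x ∈ S, ∀ y ∈ S, x ⊓ y ∈ S := fun x hx y hy => by
  have := h.compl_mem _ (h.sup_mem _ (h.compl_mem x hx) _ (h.compl_mem y hy))
  simpa using this

lemma map_bot (h : IsPM S m) : m ⊥ = 0 := by
  have := h.add ⊥ h.bot_mem ⊥ h.bot_mem (by simp)
  simp only [sup_idem] at this; linarith

lemma mono (h : IsPM S m) : ∀ x ∈ S, ∀ y ∈ S, x ≤ y → m x ≤ m y := fun x hx y hy hxy => by
  have hmem : y ⊓ xᶜ ∈ S := h.inf_mem y hy _ (h.compl_mem x hx)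
  have hd : x ⊓ (y ⊓ xᶜ) = ⊥ := by rw [inf_comm y, ← inf_assoc]; simp
  have hs : x ⊔ y ⊓ xᶜ = y := by
    rw [sup_inf_left]; simp [sup_eq_right.2 hxy]
  have h1 := h.add x hx _ hmem hd
  rw [hs] at h1
  have := h.nonneg _ hmem
  linarith

lemma le_one (h : IsPM S m) : ∀ x ∈ S, m x ≤ 1 := fun x hx =>
  h.map_top ▸ h.mono x hx ⊤ h.top_mem le_top

lemma subadd (h : IsPM S m) : ∀ x ∈ S, ∀ y ∈ S, m (x ⊔ y) ≤ m x + m y := fun x hx y hy => by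
  have hmem : y ⊓ xᶜ ∈ S := h.inf_mem y hy _ (h.compl_mem x hx)
  have hd : x ⊓ (y ⊓ xᶜ) = ⊥ := by rw [inf_comm y, ← inf_assoc]; simp
  have hs : x ⊔ y ⊓ xᶜ = x ⊔ y := by
    rw [sup_inf_left]; simp
  have h1 := h.add x hx _ hmem hd
  rw [hs] at h1
  have := h.mono _ hmem y hy inf_le_left
  linarith

end IsPM

lemma one_step {S : Set B} {m : B → ℝ} (h : IsPM S m) (b : B) :
    ∃ S' : Set B, ∃ m' : B → ℝ, IsPM S' m' ∧ S ⊆ S' ∧ b ∈ S' ∧ ∀ x ∈ S, m' x = m x := by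
  classical
  set outer : B → ℝ := fun y => sInf (m '' {t | t ∈ S ∧ y ≤ t}) with houter
  set inner : B → ℝ := fun y => sSup (m '' {t | t ∈ S ∧ t ≤ y}) with hinner
  -- basic facts about outer and inner
  have outer_le : ∀ y, ∀ t ∈ S, y ≤ t → outer y ≤ m t := by
    intro y t ht hyt
    exact csInf_le ⟨0, by rintro r ⟨u, ⟨hu, _⟩, rfl⟩; exact h.nonneg u hu⟩
      ⟨t, ⟨ht, hyt⟩, rfl⟩
  have le_outer : ∀ y c, (∀ t ∈ S, y ≤ t → c ≤ m t) → c ≤ outer y := by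
    intro y c hc
    exact le_csInf ⟨m ⊤, ⊤, ⟨h.top_mem, le_top⟩, rfl⟩
      (by rintro r ⟨u, ⟨hu, hyu⟩, rfl⟩; exact hc u hu hyu)
  have le_inner : ∀ y, ∀ t ∈ S, t ≤ y → m t ≤ inner y := by
    intro y t ht hty
    exact le_csSup ⟨1, by rintro r ⟨u, ⟨hu, _⟩, rfl⟩; exact h.le_one u hu⟩
      ⟨t, ⟨ht, hty⟩, rfl⟩
  have inner_le : ∀ y c, (∀ t ∈ S, t ≤ y → m t ≤ c) → inner y ≤ c := by
    intro y c hc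
    exact csSup_le ⟨m ⊥, ⊥, ⟨h.bot_mem, bot_le⟩, rfl⟩
      (by rintro r ⟨u, ⟨hu, huy⟩, rfl⟩; exact hc u hu huy)
  have outer_nonneg : ∀ y, 0 ≤ outer y :=
    fun y => le_outer y 0 (fun t ht _ => h.nonneg t ht)
  have inner_nonneg : ∀ y, 0 ≤ inner y :=
    fun y => h.map_bot ▸ le_inner y ⊥ h.bot_mem bot_le
  -- additivity of outer on pieces below b
  have outer_add : ∀ s ∈ S, ∀ t ∈ S, s ⊓ t ⊓ b = ⊥ →
      outer ((s ⊔ t) ⊓ b) = outer (s ⊓ b) + outer (t ⊓ b) := by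
    intro s hs t ht hdisj
    have key : ∀ u ∈ S, s ⊓ b ≤ u → ∀ v ∈ S, t ⊓ b ≤ v →
        outer ((s ⊔ t) ⊓ b) ≤ m u + m v := by
      intro u hu hsu v hv htv
      have h1 : (s ⊔ t) ⊓ b ≤ u ⊔ v := by
        rw [inf_sup_right]; exact sup_le_sup hsu htv
      exact le_trans (outer_le _ _ (h.sup_mem u hu v hv) h1) (h.subadd u hu v hv)
    have k2 : ∀ u ∈ S, s ⊓ b ≤ u → outer ((s ⊔ t) ⊓ b) - m u ≤ outer (t ⊓ b) := by
      intro u hu hsu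
      refine le_outer _ _ (fun v hv htv => ?_)
      linarith [key u hu hsu v hv htv]
    have k3 : outer ((s ⊔ t) ⊓ b) - outer (t ⊓ b) ≤ outer (s ⊓ b) := by
      refine le_outer _ _ (fun u hu hsu => ?_)
      linarith [k2 u hu hsu]
    have ge1 : ∀ w ∈ S, (s ⊔ t) ⊓ b ≤ w → outer (s ⊓ b) + outer (t ⊓ b) ≤ m w := by
      intro w hw hle
      have hsb : s ⊓ b ≤ w := le_trans (inf_le_inf_right b le_sup_left) hle
      have htb : t ⊓ b ≤ w := le_trans (inf_le_inf_right b le_sup_right) hle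
      have h1 : outer (s ⊓ b) ≤ m (w ⊓ s) :=
        outer_le _ _ (h.inf_mem w hw s hs) (le_inf hsb inf_le_left)
      have htsc : t ⊓ b ≤ sᶜ := by
        rw [le_compl_iff_disjoint_left, disjoint_iff, ← inf_assoc]
        exact hdisj
      have h2 : outer (t ⊓ b) ≤ m (w ⊓ (t ⊓ sᶜ)) :=
        outer_le _ _ (h.inf_mem w hw _ (h.inf_mem t ht _ (h.compl_mem s hs)))
          (le_inf htb (le_inf inf_le_left htsc))
      have hd : (w ⊓ s) ⊓ (w ⊓ (t ⊓ sᶜ)) = ⊥ := by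
        rw [eq_bot_iff]
        calc (w ⊓ s) ⊓ (w ⊓ (t ⊓ sᶜ)) ≤ s ⊓ sᶜ := by
              refine le_inf (le_trans inf_le_left inf_le_right) ?_
              exact le_trans inf_le_right (le_trans inf_le_right inf_le_right)
          _ = ⊥ := by simp
      have hadd := h.add _ (h.inf_mem w hw s hs) _
        (h.inf_mem w hw _ (h.inf_mem t ht _ (h.compl_mem s hs))) hd
      have hle2 : m ((w ⊓ s) ⊔ (w ⊓ (t ⊓ sᶜ))) ≤ m w := by
        refine h.mono _ (h.sup_mem _ (h.inf_mem w hw s hs) _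
          (h.inf_mem w hw _ (h.inf_mem t ht _ (h.compl_mem s hs)))) w hw ?_
        exact sup_le inf_le_left inf_le_left
      linarith
    have := le_outer _ _ ge1
    linarith
  -- additivity of inner on pieces below bᶜ
  have inner_add : ∀ s ∈ S, ∀ t ∈ S, s ⊓ t ⊓ bᶜ = ⊥ →
      inner ((s ⊔ t) ⊓ bᶜ) = inner (s ⊓ bᶜ) + inner (t ⊓ bᶜ) := by
    intro s hs t ht hdisj
    have key : ∀ u ∈ S, u ≤ s ⊓ bᶜ → ∀ v ∈ S, v ≤ t ⊓ bᶜ →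
        m u + m v ≤ inner ((s ⊔ t) ⊓ bᶜ) := by
      intro u hu hus v hv hvt
      have hd : u ⊓ v = ⊥ := by
        rw [eq_bot_iff]
        calc u ⊓ v ≤ (s ⊓ bᶜ) ⊓ (t ⊓ bᶜ) := inf_le_inf hus hvt
          _ = s ⊓ t ⊓ bᶜ := by rw [inf_inf_inf_comm, inf_idem]
          _ = ⊥ := hdisj
      have hsup : u ⊔ v ≤ (s ⊔ t) ⊓ bᶜ := by
        rw [inf_sup_right]; exact sup_le_sup hus hvt
      have := le_inner _ _ (h.sup_mem u hu v hv) hsup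
      rw [h.add u hu v hv hd] at this
      exact this
    have k2 : ∀ u ∈ S, u ≤ s ⊓ bᶜ → m u + inner (t ⊓ bᶜ) ≤ inner ((s ⊔ t) ⊓ bᶜ) := by
      intro u hu hus
      have : inner (t ⊓ bᶜ) ≤ inner ((s ⊔ t) ⊓ bᶜ) - m u := by
        refine inner_le _ _ (fun v hv hvt => ?_)
        linarith [key u hu hus v hv hvt]
      linarith
    have ge1 : inner (s ⊓ bᶜ) + inner (t ⊓ bᶜ) ≤ inner ((s ⊔ t) ⊓ bᶜ) := by
      have : inner (s ⊓ bᶜ) ≤ inner ((s ⊔ t) ⊓ bᶜ) - inner (t ⊓ bᶜ) := by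
        refine inner_le _ _ (fun u hu hus => ?_)
        linarith [k2 u hu hus]
      linarith
    have le1 : inner ((s ⊔ t) ⊓ bᶜ) ≤ inner (s ⊓ bᶜ) + inner (t ⊓ bᶜ) := by
      refine inner_le _ _ (fun w hw hwst => ?_)
      have hws : w ⊓ s ≤ s ⊓ bᶜ := le_inf inf_le_right
        (le_trans inf_le_left (le_trans hwst inf_le_right))
      have hwsc : w ⊓ sᶜ ≤ t ⊓ bᶜ := by
        refine le_inf ?_ (le_trans inf_le_left (le_trans hwst inf_le_right))
        have : w ⊓ sᶜ ≤ (s ⊔ t) ⊓ sᶜ :=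
          inf_le_inf_right _ (le_trans hwst inf_le_left)
        refine le_trans this ?_
        rw [inf_sup_right]; simp
      have hd : (w ⊓ s) ⊓ (w ⊓ sᶜ) = ⊥ := by
        rw [inf_inf_inf_comm]; simp
      have hsplit : (w ⊓ s) ⊔ (w ⊓ sᶜ) = w := split_eq s w
      have hadd := h.add _ (h.inf_mem w hw s hs) _ (h.inf_mem w hw _ (h.compl_mem s hs)) hd
      rw [hsplit] at hadd
      have h1 := le_inner _ _ (h.inf_mem w hw s hs) hws
      have h2 := le_inner _ _ (h.inf_mem w hw _ (h.compl_mem s hs)) hwsc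
      linarith
    linarith
  -- agreement: outer (s ⊓ b) + inner (s ⊓ bᶜ) = m s for s ∈ S
  have agree : ∀ s ∈ S, outer (s ⊓ b) + inner (s ⊓ bᶜ) = m s := by
    intro s hs
    have le1 : inner (s ⊓ bᶜ) ≤ m s - outer (s ⊓ b) := by
      refine inner_le _ _ (fun t ht hts => ?_)
      have hts' : t ≤ s := le_trans hts inf_le_left
      have htbc : t ≤ bᶜ := le_trans hts inf_le_right
      have h1 : s ⊓ b ≤ s ⊓ tᶜ := by
        refine inf_le_inf_left s ?_
        exact le_compl_comm.mp htbc
      have h2 : outer (s ⊓ b) ≤ m (s ⊓ tᶜ) :=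
        outer_le _ _ (h.inf_mem s hs _ (h.compl_mem t ht)) h1
      have hd : t ⊓ (s ⊓ tᶜ) = ⊥ := by rw [inf_left_comm]; simp
      have hsplit : t ⊔ (s ⊓ tᶜ) = s := by
        rw [sup_inf_left]; simp [sup_eq_right.2 hts']
      have hadd := h.add t ht _ (h.inf_mem s hs _ (h.compl_mem t ht)) hd
      rw [hsplit] at hadd
      linarith
    have ge1 : m s - inner (s ⊓ bᶜ) ≤ outer (s ⊓ b) := by
      refine le_outer _ _ (fun u hu hsu => ?_)
      have h1 : s ⊓ uᶜ ≤ s ⊓ bᶜ := by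
        refine le_inf inf_le_left ?_
        rw [le_compl_iff_disjoint_left, disjoint_iff, eq_bot_iff]
        have h2 : b ⊓ (s ⊓ uᶜ) ≤ u ⊓ uᶜ :=
          le_inf (le_trans (le_inf (le_trans inf_le_right inf_le_left) inf_le_left) hsu)
            (le_trans inf_le_right inf_le_right)
        exact le_trans h2 (by simp)
      have h2 : m (s ⊓ uᶜ) ≤ inner (s ⊓ bᶜ) :=
        le_inner _ _ (h.inf_mem s hs _ (h.compl_mem u hu)) h1
      have hd : (s ⊓ u) ⊓ (s ⊓ uᶜ) = ⊥ := by rw [inf_inf_inf_comm]; simp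
      have hsplit : (s ⊓ u) ⊔ (s ⊓ uᶜ) = s := split_eq u s
      have hadd := h.add _ (h.inf_mem s hs u hu) _ (h.inf_mem s hs _ (h.compl_mem u hu)) hd
      rw [hsplit] at hadd
      have h3 : m (s ⊓ u) ≤ m u := h.mono _ (h.inf_mem s hs u hu) u hu inf_le_right
      linarith
    linarith
  -- assemble the extension
  refine ⟨{x | ∃ s ∈ S, ∃ t ∈ S, x = (s ⊓ b) ⊔ (t ⊓ bᶜ)},
    fun x => outer (x ⊓ b) + inner (x ⊓ bᶜ), ?_, ?_, ?_, ?_⟩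
  · constructor
    · exact ⟨⊤, h.top_mem, ⊤, h.top_mem, (split_eq b ⊤).symm⟩
    · rintro x ⟨s, hs, t, ht, rfl⟩
      exact ⟨sᶜ, h.compl_mem s hs, tᶜ, h.compl_mem t ht, id4 b s t⟩
    · rintro x ⟨s, hs, t, ht, rfl⟩ y ⟨s', hs', t', ht', rfl⟩
      exact ⟨s ⊔ s', h.sup_mem s hs s' hs', t ⊔ t', h.sup_mem t ht t' ht', id3 b s t s' t'⟩
    · exact fun x _ => add_nonneg (outer_nonneg _) (inner_nonneg _)
    · have h1 := agree ⊤ h.top_mem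
      rw [h.map_top] at h1
      exact h1
    · rintro x ⟨s, hs, t, ht, rfl⟩ y ⟨s', hs', t', ht', rfl⟩ hxy
      have d1 : s ⊓ s' ⊓ b = ⊥ := by
        have h2 : (s ⊓ b) ⊓ (s' ⊓ b) ≤ ⊥ := hxy ▸ inf_le_inf le_sup_left le_sup_left
        rw [inf_inf_inf_comm, inf_idem] at h2
        exact le_bot_iff.mp h2
      have d2 : t ⊓ t' ⊓ bᶜ = ⊥ := by
        have h2 : (t ⊓ bᶜ) ⊓ (t' ⊓ bᶜ) ≤ ⊥ := hxy ▸ inf_le_inf le_sup_right le_sup_right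
        rw [inf_inf_inf_comm, inf_idem] at h2
        exact le_bot_iff.mp h2
      simp only [id3, id1, id2]
      rw [outer_add s hs s' hs' d1, inner_add t ht t' ht' d2]
      ring
  · exact fun x hx => ⟨x, hx, x, hx, (split_eq b x).symm⟩
  · exact ⟨⊤, h.top_mem, ⊥, h.bot_mem, by simp⟩
  · exact fun x hx => agree x hx

lemma finset_ext {A : Type*} [BooleanAlgebra A] (e : BoundedLatticeHom A B)
    (he : Function.Injective e) (μ : A → ℝ) (hμ0 : ∀ a, 0 ≤ μ a) (hμ1 : μ ⊤ = 1)
    (hμadd : ∀ a b : A, a ⊓ b = ⊥ → μ (a ⊔ b) = μ a + μ b) (F : Finset B) :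
    ∃ S : Set B, ∃ m : B → ℝ, IsPM S m ∧ (↑F : Set B) ⊆ S ∧
      ∀ a : A, e a ∈ S ∧ m (e a) = μ a := by
  classical
  induction F using Finset.induction_on with
  | empty =>
    set m₀ : B → ℝ := fun x => if hx : ∃ a, e a = x then μ hx.choose else 0 with hm₀
    have meval : ∀ a : A, m₀ (e a) = μ a := by
      intro a
      have hx : ∃ a', e a' = e a := ⟨a, rfl⟩
      rw [hm₀]
      simp only [dif_pos hx]
      exact congrArg μ (he hx.choose_spec)
    have ecompl : ∀ a : A, (e a)ᶜ = e aᶜ := fun a => by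
      refine (IsCompl.of_eq ?_ ?_).compl_eq
      · rw [← InfHomClass.map_inf]; simp
      · rw [← SupHomClass.map_sup]; simp
    refine ⟨Set.range e, m₀, ?_, by simp, fun a => ⟨⟨a, rfl⟩, meval a⟩⟩
    constructor
    · exact ⟨⊤, TopHomClass.map_top e⟩
    · rintro x ⟨a, rfl⟩
      exact ⟨aᶜ, (ecompl a).symm⟩
    · rintro x ⟨a, rfl⟩ y ⟨a', rfl⟩
      exact ⟨a ⊔ a', SupHomClass.map_sup e a a'⟩
    · rintro x ⟨a, rfl⟩
      rw [meval]; exact hμ0 a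
    · rw [show (⊤ : B) = e ⊤ from (TopHomClass.map_top e).symm, meval]; exact hμ1
    · rintro x ⟨a, rfl⟩ y ⟨a', rfl⟩ hd
      have hd' : a ⊓ a' = ⊥ := he (by rw [InfHomClass.map_inf, BotHomClass.map_bot, hd])
      rw [← SupHomClass.map_sup, meval, meval, meval]
      exact hμadd a a' hd'
  | insert b F hb ih =>
    obtain ⟨S, m, hPM, hFS, hagree⟩ := ih
    obtain ⟨S', m', hPM', hSS', hbS', hext⟩ := one_step hPM b
    refine ⟨S', m', hPM', ?_, fun a => ⟨hSS' (hagree a).1, by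
      rw [hext _ (hagree a).1]; exact (hagree a).2⟩⟩
    intro x hx
    simp only [Finset.coe_insert, Set.mem_insert_iff] at hx
    rcases hx with rfl | hx
    · exact hbS'
    · exact hSS' (hFS hx)

end PM

/-- Every finitely additive probability measure on a subalgebra `A` of a
Boolean algebra `B` (here: the image of an injective Boolean-algebra embedding
`e : A → B`) extends to a finitely additive probability measure on `B`. -/
theorem stmt_6 {A B : Type*} [BooleanAlgebra A] [BooleanAlgebra B]
    (e : BoundedLatticeHom A B) (he : Function.Injective e)
    (μ : A → ℝ)
    (hμ0 : ∀ a, 0 ≤ μ a) (hμ1 : μ ⊤ = 1)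
    (hμadd : ∀ a b : A, a ⊓ b = ⊥ → μ (a ⊔ b) = μ a + μ b) :
    ∃ ν : B → ℝ, (∀ b, 0 ≤ ν b) ∧ ν ⊤ = 1 ∧
      (∀ b b' : B, b ⊓ b' = ⊥ → ν (b ⊔ b') = ν b + ν b') ∧
      ∀ a : A, ν (e a) = μ a := by
  classical
  choose SS mm hPM hSub hAg using finset_ext e he μ hμ0 hμ1 hμadd
  let 𝒰 : Ultrafilter (Finset B) := Ultrafilter.of atTop
  have h𝒰 : (𝒰 : Filter (Finset B)) ≤ atTop := Ultrafilter.of_le atTop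
  set g : B → Finset B → ℝ := fun x F => max 0 (min (mm F x) 1) with hgdef
  have hg01 : ∀ x F, g x F ∈ Set.Icc (0:ℝ) 1 :=
    fun x F => ⟨le_max_left _ _, max_le zero_le_one (min_le_right _ _)⟩
  have hgeq : ∀ x F, x ∈ SS F → g x F = mm F x := by
    intro x F hx
    have h0 := (hPM F).nonneg x hx
    have h1 := (hPM F).le_one x hx
    rw [hgdef]
    simp only
    rw [min_eq_left h1, max_eq_right h0]
  have hlim : ∀ x : B, ∃ L ∈ Set.Icc (0:ℝ) 1, Tendsto (g x) 𝒰 (𝓝 L) := by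
    intro x
    obtain ⟨L, hL, hconv⟩ := (isCompact_Icc (a := (0:ℝ)) (b := 1)).ultrafilter_le_nhds
      (𝒰.map (g x))
      (le_principal_iff.mpr (Filter.mem_map.mpr (Filter.univ_mem' (fun F => hg01 x F))))
    exact ⟨L, hL, hconv⟩
  choose ν hν01 hνlim using hlim
  refine ⟨ν, fun x => (hν01 x).1, ?_, ?_, ?_⟩
  · have hfun : g ⊤ = fun _ => (1:ℝ) :=
      funext fun F => by rw [hgeq ⊤ F (hPM F).top_mem, (hPM F).map_top]
    have hc : Tendsto (g ⊤) 𝒰 (𝓝 1) := by rw [hfun]; exact tendsto_const_nhds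
    exact tendsto_nhds_unique (hνlim ⊤) hc
  · intro x y hxy
    have hev : ∀ᶠ F in (𝒰 : Filter (Finset B)), g (x ⊔ y) F = g x F + g y F := by
      refine h𝒰 (eventually_atTop.mpr ⟨{x, y}, fun F hF => ?_⟩)
      have hxF : x ∈ SS F := hSub F (hF (by simp))
      have hyF : y ∈ SS F := hSub F (hF (by simp))
      have hxyF : x ⊔ y ∈ SS F := (hPM F).sup_mem x hxF y hyF
      rw [hgeq _ _ hxyF, hgeq _ _ hxF, hgeq _ _ hyF]
      exact (hPM F).add x hxF y hyF hxy
    have h1 : Tendsto (g (x ⊔ y)) 𝒰 (𝓝 (ν x + ν y)) :=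
      Tendsto.congr' (Filter.EventuallyEq.symm hev) ((hνlim x).add (hνlim y))
    exact tendsto_nhds_unique (hνlim (x ⊔ y)) h1
  · intro a
    have hfun : g (e a) = fun _ => μ a :=
      funext fun F => by rw [hgeq _ _ (hAg F a).1, (hAg F a).2]
    have hc : Tendsto (g (e a)) 𝒰 (𝓝 (μ a)) := by rw [hfun]; exact tendsto_const_nhds
    exact tendsto_nhds_unique (hνlim (e a)) hc
end

section
/- Let X be a Banach space with norm ‖·‖. If ‖·‖ is measurable with respect to the σ-algebra Ba(X,w) generated by X*, then X* is weak*-separable. -/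
open MeasureTheory


/-- The weak Baire σ-algebra `Ba(X,w)` on a normed space `X`: the σ-algebra generated by
the continuous linear functionals on `X`. -/
noncomputable def weakBaire (X : Type*) [NormedAddCommGroup X] [NormedSpace ℝ X] :
    MeasurableSpace X :=
  ⨆ f : X →L[ℝ] ℝ, MeasurableSpace.comap f (borel ℝ)

section Aux

variable {X : Type*} [NormedAddCommGroup X] [NormedSpace ℝ X]

/-- Every weak-Baire measurable set is measurable with respect to the σ-algebra generated
by countably many functionals. -/
lemma weakBaire_exists_seq {s : Set X} (hs : MeasurableSet[weakBaire X] s) :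
    ∃ F : ℕ → (X →L[ℝ] ℝ),
      MeasurableSet[⨆ n, MeasurableSpace.comap (F n) (borel ℝ)] s := by
  rw [weakBaire, MeasurableSpace.measurableSet_iSup] at hs
  induction hs with
  | basic u hu =>
      obtain ⟨f, hf⟩ := hu
      exact ⟨fun _ => f, le_iSup (fun _ : ℕ => MeasurableSpace.comap f (borel ℝ)) 0 u hf⟩
  | empty => exact ⟨fun _ => 0, @MeasurableSet.empty _ (⨆ n, MeasurableSpace.comap ((fun _ : ℕ => (0 : X →L[ℝ] ℝ)) n) (borel ℝ))⟩
  | compl u _ ih =>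
      obtain ⟨F, hF⟩ := ih
      exact ⟨F, hF.compl⟩
  | iUnion g _ ih =>
      choose F hF using ih
      refine ⟨fun k : ℕ => F k.unpair.1 k.unpair.2, MeasurableSet.iUnion fun n => ?_⟩
      have hle : (⨆ m, MeasurableSpace.comap (F n m) (borel ℝ)) ≤
          ⨆ k : ℕ, MeasurableSpace.comap (F k.unpair.1 k.unpair.2) (borel ℝ) := by
        refine iSup_le fun m => ?_
        have := le_iSup (fun k : ℕ => MeasurableSpace.comap (F k.unpair.1 k.unpair.2) (borel ℝ))
          (Nat.pair n m)
        simpa [Nat.unpair_pair] using this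
      exact hle _ (hF n)

/-- If the closed unit ball is measurable w.r.t. the σ-algebra generated by a countable family
of functionals, then this family separates points. -/
lemma sep_of_ball_meas {F : ℕ → (X →L[ℝ] ℝ)}
    (hB : MeasurableSet[⨆ n, MeasurableSpace.comap (F n) (borel ℝ)] {x : X | ‖x‖ ≤ 1}) :
    ∀ x : X, (∀ n, F n x = 0) → x = 0 := by
  classical
  set T : X → (ℕ → ℝ) := fun x n => F n x with hT
  have hle : (⨆ n, MeasurableSpace.comap (F n) (borel ℝ)) ≤
      MeasurableSpace.comap T MeasurableSpace.pi := by
    refine iSup_le fun n => ?_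
    have h1 : (F n : X → ℝ) = (fun u : ℕ → ℝ => u n) ∘ T := rfl
    rw [h1, ← MeasurableSpace.comap_comp]
    refine MeasurableSpace.comap_mono ?_
    have h2 : MeasurableSpace.comap (fun u : ℕ → ℝ => u n) (borel ℝ) ≤ MeasurableSpace.pi := by
      rw [← BorelSpace.measurable_eq (α := ℝ)]
      exact (measurable_pi_apply n).comap_le
    exact h2
  obtain ⟨S, -, hS⟩ := hle _ hB
  intro x hx
  have hTx : ∀ c : ℝ, T (c • x) = T 0 := by
    intro c
    funext n
    simp [hT, hx n]
  have h0 : (0 : X) ∈ {x : X | ‖x‖ ≤ 1} := by simp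
  have hball : ∀ c : ℝ, ‖c • x‖ ≤ 1 := by
    intro c
    have h1 : (c • x) ∈ T ⁻¹' S ↔ (0 : X) ∈ T ⁻¹' S := by
      simp only [Set.mem_preimage, hTx c]
    rw [hS] at h1
    exact h1.mpr h0
  by_contra hxne
  have hnorm : ‖x‖ > 0 := norm_pos_iff.mpr hxne
  have := hball (2 / ‖x‖)
  rw [norm_smul] at this
  have h2 : ‖(2 / ‖x‖ : ℝ)‖ = 2 / ‖x‖ := by
    rw [Real.norm_eq_abs, abs_of_pos (by positivity)]
  rw [h2, div_mul_cancel₀] at this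
  · linarith
  · exact ne_of_gt hnorm

end Aux

/-- If the norm of a Banach space `X` is measurable with respect to the
σ-algebra `Ba(X,w)` generated by `X*`, then `X*` is weak*-separable. -/
theorem stmt_9 {X : Type*} [NormedAddCommGroup X] [NormedSpace ℝ X] [CompleteSpace X]
    (hmeas : @Measurable X ℝ (weakBaire X) (borel ℝ) (fun x => ‖x‖)) :
    TopologicalSpace.SeparableSpace (WeakDual ℝ X) := by
  classical
  have hB : MeasurableSet[weakBaire X] {x : X | ‖x‖ ≤ 1} := by
    have : MeasurableSet[borel ℝ] (Set.Iic (1 : ℝ)) := by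
      rw [← BorelSpace.measurable_eq (α := ℝ)]
      exact measurableSet_Iic
    exact hmeas this
  obtain ⟨F, hF⟩ := weakBaire_exists_seq hB
  have hsep : ∀ x : X, (∀ n, F n x = 0) → x = 0 := sep_of_ball_meas hF
  -- the countable family as elements of the weak dual
  let Fd : ℕ → WeakDual ℝ X := F
  let S : Submodule ℝ (WeakDual ℝ X) := Submodule.span ℝ (Set.range Fd)
  -- interpolation: any functional agrees with an element of S on any finite set
  have interp : ∀ (f : WeakDual ℝ X) (I : Finset X), ∃ g ∈ S, ∀ x ∈ I, g x = f x := by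
    intro f I
    let E : (WeakDual ℝ X) →ₗ[ℝ] (I → ℝ) :=
      { toFun := fun g i => g (i : X)
        map_add' := fun g h => by funext i; rfl
        map_smul' := fun c g => by funext i; rfl }
    by_cases h : E f ∈ S.map E
    · obtain ⟨g, hg, hgE⟩ := h
      exact ⟨g, hg, fun x hx => congrFun hgE ⟨x, hx⟩⟩
    · exfalso
      set W : Submodule ℝ (I → ℝ) := S.map E with hW
      have hv : W.mkQ (E f) ≠ 0 := by
        rw [Submodule.mkQ_apply, ne_eq, Submodule.Quotient.mk_eq_zero]
        exact h
      have hφ : ∃ φ : Module.Dual ℝ ((I → ℝ) ⧸ W), φ (W.mkQ (E f)) ≠ 0 := by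
        by_contra hcon
        push_neg at hcon
        exact hv ((Module.forall_dual_apply_eq_zero_iff ℝ _).mp hcon)
      obtain ⟨φ, hφ⟩ := hφ
      set lam : Module.Dual ℝ (I → ℝ) := φ.comp W.mkQ with hlam
      have hlam0 : ∀ g ∈ S, lam (E g) = 0 := by
        intro g hg
        have hmem : E g ∈ W := Submodule.mem_map_of_mem hg
        have : W.mkQ (E g) = 0 := (Submodule.Quotient.mk_eq_zero _).2 hmem
        simp [hlam, LinearMap.comp_apply, this]
      set x₀ : X := ∑ i : I, lam (fun j => if i = j then (1 : ℝ) else 0) • (i : X) with hx₀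
      have hx0 : ∀ g : X →L[ℝ] ℝ, g x₀ = lam (E g) := by
        intro g
        rw [LinearMap.pi_apply_eq_sum_univ lam (E g)]
        rw [hx₀, map_sum]
        refine Finset.sum_congr rfl fun i _ => ?_
        rw [g.map_smul]
        simp only [smul_eq_mul]
        rw [mul_comm]
        rfl
      have hx₀0 : x₀ = 0 := by
        refine hsep x₀ fun n => ?_
        rw [hx0 (F n)]
        exact hlam0 (Fd n) (Submodule.subset_span ⟨n, rfl⟩)
      have hf0 : f x₀ = 0 := by rw [hx₀0, map_zero]
      have : lam (E f) ≠ 0 := hφ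
      rw [← hx0 f] at this
      exact this hf0
  -- the span is dense in the weak-* topology
  have hind : Topology.IsInducing (fun (g : WeakDual ℝ X) (y : X) => topDualPairing ℝ X g y) :=
    ⟨rfl⟩
  have hdense : Dense (S : Set (WeakDual ℝ X)) := by
    intro f
    rw [hind.closure_eq_preimage_closure_image, Set.mem_preimage, mem_closure_iff_nhds]
    intro U hU
    rw [nhds_pi, Filter.mem_pi'] at hU
    obtain ⟨I, V, hV, hsub⟩ := hU
    obtain ⟨g, hgS, hg⟩ := interp f I
    refine ⟨fun y => topDualPairing ℝ X g y, hsub ?_, ⟨g, hgS, rfl⟩⟩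
    intro x hx
    have : g x = f x := hg x hx
    convert mem_of_mem_nhds (hV x) using 1
    exact this
  -- conclude separability
  have hcount : (Set.range Fd).Countable := Set.countable_range Fd
  have hSsep : TopologicalSpace.IsSeparable (S : Set (WeakDual ℝ X)) :=
    hcount.isSeparable.span
  obtain ⟨c, hc, hSc⟩ := hSsep
  refine ⟨⟨c, hc, ?_⟩⟩
  have : Dense (closure c) := (hdense.mono hSc)
  exact dense_closure.mp this
end

section
/- Let κ be a Kunen cardinal, i.e., P(κ × κ) = P(κ) ⊗ P(κ) as σ-algebras. Then for every n ≥ 1, P(κⁿ) = ⊗ₙ P(κ), i.e., every subset of κⁿ belongs to the n-fold product σ-algebra of the full power-set σ-algebras. -/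
open MeasurableSpace MeasureTheory

/-- Comap of the full σ-algebra along an injective map is full. -/
lemma comap_top_of_injective {α β : Type*} {g : α → β} (hg : Function.Injective g) :
    MeasurableSpace.comap g (⊤ : MeasurableSpace β) = ⊤ := by
  rw [eq_top_iff]
  intro s _
  exact ⟨g '' s, trivial, hg.preimage_image s⟩

/-- If κ is Kunen and α, β inject into κ, then the product σ-algebra on α × β is full. -/
lemma kunen_pair {κ α β : Type*}
    (h : (MeasurableSpace.comap (Prod.fst : κ × κ → κ) (⊤ : MeasurableSpace κ) ⊔
          MeasurableSpace.comap (Prod.snd : κ × κ → κ) (⊤ : MeasurableSpace κ)) =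
          (⊤ : MeasurableSpace (κ × κ)))
    (i : α → κ) (hi : Function.Injective i) (j : β → κ) (hj : Function.Injective j) :
    (MeasurableSpace.comap (Prod.fst : α × β → α) (⊤ : MeasurableSpace α) ⊔
     MeasurableSpace.comap (Prod.snd : α × β → β) (⊤ : MeasurableSpace β)) =
     (⊤ : MeasurableSpace (α × β)) := by
  refine le_antisymm le_top ?_
  have hF : Function.Injective (Prod.map i j) := hi.prodMap hj
  calc (⊤ : MeasurableSpace (α × β))
      = MeasurableSpace.comap (Prod.map i j) ⊤ := (comap_top_of_injective hF).symm
    _ = MeasurableSpace.comap (Prod.map i j)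
          (MeasurableSpace.comap (Prod.fst : κ × κ → κ) ⊤ ⊔
           MeasurableSpace.comap (Prod.snd : κ × κ → κ) ⊤) := by rw [h]
    _ = MeasurableSpace.comap (Prod.fst ∘ Prod.map i j) ⊤ ⊔
        MeasurableSpace.comap (Prod.snd ∘ Prod.map i j) ⊤ := by
          rw [MeasurableSpace.comap_sup, MeasurableSpace.comap_comp,
            MeasurableSpace.comap_comp]
    _ ≤ MeasurableSpace.comap (Prod.fst : α × β → α) ⊤ ⊔
        MeasurableSpace.comap (Prod.snd : α × β → β) ⊤ := by
          have h1 : Prod.fst ∘ Prod.map i j = i ∘ (Prod.fst : α × β → α) := rfl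
          have h2 : Prod.snd ∘ Prod.map i j = j ∘ (Prod.snd : α × β → β) := rfl
          rw [h1, h2, ← MeasurableSpace.comap_comp, ← MeasurableSpace.comap_comp]
          exact sup_le_sup (MeasurableSpace.comap_mono le_top)
            (MeasurableSpace.comap_mono le_top)

/-- If `κ` is a Kunen cardinal, i.e. the product σ-algebra
`P(κ) ⊗ P(κ)` (generated as `comap fst ⊤ ⊔ comap snd ⊤`, equivalently by measurable
rectangles) is all of `P(κ × κ)`, then for every `n ≥ 1` the `n`-fold product σ-algebra
`⊗ₙ P(κ)` on `κⁿ` is all of `P(κⁿ)`. -/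
theorem stmt_16 (κ : Type*)
    (h : (MeasurableSpace.comap (Prod.fst : κ × κ → κ) (⊤ : MeasurableSpace κ) ⊔
          MeasurableSpace.comap (Prod.snd : κ × κ → κ) (⊤ : MeasurableSpace κ)) =
          (⊤ : MeasurableSpace (κ × κ))) :
    ∀ n : ℕ, 1 ≤ n →
      (⨆ i : Fin n, MeasurableSpace.comap (fun f : Fin n → κ => f i)
        (⊤ : MeasurableSpace κ)) = (⊤ : MeasurableSpace (Fin n → κ)) := by
  -- First handle the finite case separately.
  by_cases hfin : Finite κ
  · intro n _
    refine le_antisymm le_top ?_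
    intro s _
    have : Finite (Fin n → κ) := inferInstance
    set M : MeasurableSpace (Fin n → κ) :=
      ⨆ i : Fin n, MeasurableSpace.comap (fun f : Fin n → κ => f i)
        (⊤ : MeasurableSpace κ) with hM
    have hsingle : ∀ f : Fin n → κ, MeasurableSet[M] ({f} : Set (Fin n → κ)) := by
      intro f
      have : ({f} : Set (Fin n → κ)) = ⋂ i, (fun g : Fin n → κ => g i) ⁻¹' {f i} := by
        ext g
        simp [funext_iff, Set.mem_iInter, eq_comm]
      rw [this]
      exact MeasurableSet.iInter fun i =>
        (le_iSup (fun i : Fin n => MeasurableSpace.comap (fun f : Fin n → κ => f i)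
          (⊤ : MeasurableSpace κ)) i : _ ≤ M) _ ⟨{f i}, trivial, rfl⟩
    have hs : s = ⋃ f ∈ s, {f} := by simp
    rw [hs]
    exact MeasurableSet.biUnion (Set.to_countable s) fun f _ => hsingle f
  · -- κ is infinite.
    have hinf : Infinite κ := not_finite_iff_infinite.mp hfin
    -- injection from Fin n → κ into κ for n ≥ 1
    have hinj : ∀ n : ℕ, 1 ≤ n → ∃ i : (Fin n → κ) → κ, Function.Injective i := by
      intro n hn
      have hcard : Cardinal.mk (Fin n → κ) = Cardinal.mk κ := by
        calc Cardinal.mk (Fin n → κ)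
            = Cardinal.lift.{0} (Cardinal.mk κ) ^ Cardinal.lift (Cardinal.mk (Fin n)) :=
              Cardinal.mk_arrow _ _
          _ = Cardinal.mk κ ^ (n : Cardinal) := by simp
          _ = Cardinal.mk κ := by
              rw [Cardinal.power_natCast, Cardinal.power_nat_eq (Cardinal.aleph0_le_mk κ) hn]
      obtain ⟨f⟩ := Cardinal.le_def _ _ |>.mp hcard.le
      exact ⟨f, f.injective⟩
    intro n hn
    induction n with
    | zero => omega
    | succ n ih =>
      rcases Nat.eq_or_lt_of_le hn with h1 | h1
      · -- n + 1 = 1, i.e. n = 0 : the evaluation at 0 is injective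
        have hn0 : n = 0 := by omega
        subst hn0
        refine le_antisymm le_top ?_
        have hinj0 : Function.Injective (fun f : Fin 1 → κ => f 0) := by
          intro f g hfg
          funext i
          have : i = 0 := Subsingleton.elim _ _
          rw [this]; exact hfg
        calc (⊤ : MeasurableSpace (Fin 1 → κ))
            = MeasurableSpace.comap (fun f : Fin 1 → κ => f 0) ⊤ :=
              (comap_top_of_injective hinj0).symm
          _ ≤ _ := le_iSup (fun i : Fin 1 => MeasurableSpace.comap
              (fun f : Fin 1 → κ => f i) (⊤ : MeasurableSpace κ)) 0
      · -- n ≥ 1 : inductive step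
        have hn1 : 1 ≤ n := by omega
        have IH := ih hn1
        refine le_antisymm le_top ?_
        obtain ⟨i, hi⟩ := hinj n hn1
        -- the map F : (Fin (n+1) → κ) → (Fin n → κ) × κ
        set F : (Fin (n + 1) → κ) → (Fin n → κ) × κ :=
          fun f => (fun j => f j.succ, f 0) with hF
        have hFinj : Function.Injective F := by
          intro f g hfg
          simp only [hF, Prod.mk.injEq] at hfg
          funext j
          refine Fin.cases ?_ ?_ j
          · exact hfg.2
          · intro k
            exact congrFun hfg.1 k
        have hpair := kunen_pair h i hi id Function.injective_id
        calc (⊤ : MeasurableSpace (Fin (n + 1) → κ))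
            = MeasurableSpace.comap F ⊤ := (comap_top_of_injective hFinj).symm
          _ = MeasurableSpace.comap F
                (MeasurableSpace.comap (Prod.fst : (Fin n → κ) × κ → (Fin n → κ)) ⊤ ⊔
                 MeasurableSpace.comap (Prod.snd : (Fin n → κ) × κ → κ) ⊤) := by
                rw [hpair]
          _ = MeasurableSpace.comap (Prod.fst ∘ F) ⊤ ⊔
              MeasurableSpace.comap (Prod.snd ∘ F) ⊤ := by
                rw [MeasurableSpace.comap_sup, MeasurableSpace.comap_comp,
                  MeasurableSpace.comap_comp]
          _ ≤ ⨆ i : Fin (n + 1), MeasurableSpace.comap (fun f : Fin (n + 1) → κ => f i)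
                (⊤ : MeasurableSpace κ) := by
                refine sup_le ?_ ?_
                · rw [← IH, MeasurableSpace.comap_iSup]
                  refine iSup_le fun j => ?_
                  rw [MeasurableSpace.comap_comp]
                  have : ((fun f : Fin n → κ => f j) ∘ (Prod.fst ∘ F)) =
                      fun f : Fin (n + 1) → κ => f j.succ := rfl
                  rw [this]
                  exact le_iSup (fun i : Fin (n + 1) => MeasurableSpace.comap
                    (fun f : Fin (n + 1) → κ => f i) (⊤ : MeasurableSpace κ)) j.succ
                · have : (Prod.snd ∘ F) = fun f : Fin (n + 1) → κ => f 0 := rfl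
                  rw [this]
                  exact le_iSup (fun i : Fin (n + 1) => MeasurableSpace.comap
                    (fun f : Fin (n + 1) → κ => f i) (⊤ : MeasurableSpace κ)) 0
end

section
/- Let B be a Boolean algebra with a finitely additive probability measure λ, and T ⊆ B⁺ any subset. In the setting where A is the subalgebra of B^ℕ generated by the elements G_b (from an independent family {N_b}), there exists a finitely additive probability measure μ_T on A such that for every finite r ⊆ B⁺: μ_T(⋂_{b∈r} G_b) = λ(⋂_{b∈r} b) if r ⊆ T, and μ_T(⋂_{b∈r} G_b) = 0 otherwise. -/
/-- Let `B` be a Boolean algebra with a finitely additive probability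
measure `lam`, `{N b : b ≠ ⊥}` an independent family of subsets of `ℕ`, `G b ∈ B^ℕ`
defined by `G b n = b` if `n ∈ N b` and `⊥` otherwise, and `A` the subalgebra of `B^ℕ`
generated by the `G b`. For any `T ⊆ B⁺` there is a finitely additive probability
measure `μ_T` on `A` with `μ_T(⋂_{b∈r} G b) = lam (⋂_{b∈r} b)` when `r ⊆ T`, and `= 0`
otherwise, for every finite `r ⊆ B⁺`. -/
theorem stmt_19 {B : Type*} [BooleanAlgebra B]
    (lam : B → ℝ)
    (hlam0 : ∀ b, 0 ≤ lam b) (hlam1 : lam ⊤ = 1)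
    (hlamadd : ∀ a b : B, a ⊓ b = ⊥ → lam (a ⊔ b) = lam a + lam b)
    (N : B → Set ℕ)
    (hindep : ∀ s t : Finset B, (↑s : Set B) ⊆ {b | b ≠ ⊥} → (↑t : Set B) ⊆ {b | b ≠ ⊥} →
      Disjoint s t → ∃ n : ℕ, (∀ b ∈ s, n ∈ N b) ∧ (∀ b ∈ t, n ∉ N b))
    (G : B → (ℕ → B))
    (hG : ∀ b n, (n ∈ N b → G b n = b) ∧ (n ∉ N b → G b n = ⊥))
    (A : Set (ℕ → B))
    (hAG : ∀ b : B, b ≠ ⊥ → G b ∈ A)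
    (hAtop : (⊤ : ℕ → B) ∈ A) (hAbot : (⊥ : ℕ → B) ∈ A)
    (hAcompl : ∀ a ∈ A, aᶜ ∈ A)
    (hAsup : ∀ a ∈ A, ∀ a' ∈ A, a ⊔ a' ∈ A)
    (hAinf : ∀ a ∈ A, ∀ a' ∈ A, a ⊓ a' ∈ A)
    (hAmin : ∀ S : Set (ℕ → B), (∀ b : B, b ≠ ⊥ → G b ∈ S) → (⊤ : ℕ → B) ∈ S →
      (⊥ : ℕ → B) ∈ S → (∀ a ∈ S, aᶜ ∈ S) → (∀ a ∈ S, ∀ a' ∈ S, a ⊔ a' ∈ S) →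
      (∀ a ∈ S, ∀ a' ∈ S, a ⊓ a' ∈ S) → A ⊆ S)
    (T : Set B) (hT : T ⊆ {b | b ≠ ⊥}) :
    ∃ μT : (ℕ → B) → ℝ,
      (∀ a ∈ A, 0 ≤ μT a) ∧ μT ⊤ = 1 ∧
      (∀ a ∈ A, ∀ a' ∈ A, a ⊓ a' = ⊥ → μT (a ⊔ a') = μT a + μT a') ∧
      ∀ r : Finset B, (↑r : Set B) ⊆ {b | b ≠ ⊥} →
        ((↑r : Set B) ⊆ T → μT (r.inf G) = lam (r.inf id)) ∧
        (¬ (↑r : Set B) ⊆ T → μT (r.inf G) = 0) := by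
  classical
  have hbot : lam ⊥ = 0 := by
    have h := hlamadd ⊥ ⊥ (by simp)
    simp only [sup_idem] at h
    linarith
  have hle1 : ∀ b, lam b ≤ 1 := by
    intro b
    have h := hlamadd b bᶜ (by simp)
    rw [sup_compl_eq_top, hlam1] at h
    have := hlam0 bᶜ
    linarith
  set I : Set (Finset B × Finset B) :=
    {p | (↑p.1 : Set B) ⊆ T ∧ ∀ b ∈ p.2, b ∉ T ∧ b ≠ ⊥} with hI
  set S : Finset B × Finset B → Set ℕ :=
    fun p => {n | (∀ b ∈ p.1, n ∈ N b) ∧ ∀ b ∈ p.2, n ∉ N b} with hSdef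
  have hSne : ∀ p ∈ I, (S p).Nonempty := by
    rintro p ⟨hp1, hp2⟩
    obtain ⟨n, h1, h2⟩ := hindep p.1 p.2 (fun b hb => hT (hp1 hb))
      (fun b hb => (hp2 b (by exact_mod_cast hb)).2)
      (Finset.disjoint_left.mpr fun b hb1 hb2 => (hp2 b hb2).1 (hp1 hb1))
    exact ⟨n, h1, h2⟩
  set F : Filter ℕ := ⨅ p : I, Filter.principal (S p) with hF
  have hne : Nonempty I := ⟨⟨(∅, ∅), by simp [hI]⟩⟩
  have hdir : Directed (· ≥ ·) (fun p : I => Filter.principal (S p)) := by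
    rintro ⟨p, hp1, hp2⟩ ⟨q, hq1, hq2⟩
    refine ⟨⟨(p.1 ∪ q.1, p.2 ∪ q.2), ?_, ?_⟩, ?_, ?_⟩
    · intro b hb
      rcases Finset.mem_union.mp (by exact_mod_cast hb) with h | h
      · exact hp1 (by exact_mod_cast h)
      · exact hq1 (by exact_mod_cast h)
    · intro b hb
      rcases Finset.mem_union.mp hb with h | h
      · exact hp2 b h
      · exact hq2 b h
    · refine Filter.principal_mono.mpr fun n hn => ?_
      exact ⟨fun b hb => hn.1 b (Finset.mem_union_left _ hb),
        fun b hb => hn.2 b (Finset.mem_union_left _ hb)⟩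
    · refine Filter.principal_mono.mpr fun n hn => ?_
      exact ⟨fun b hb => hn.1 b (Finset.mem_union_right _ hb),
        fun b hb => hn.2 b (Finset.mem_union_right _ hb)⟩
  have hFne : F.NeBot :=
    Filter.iInf_neBot_of_directed hdir
      (fun p => Filter.principal_neBot_iff.mpr (hSne p p.2))
  let U : Ultrafilter ℕ := @Ultrafilter.of _ F hFne
  have hUF : (U : Filter ℕ) ≤ F := Ultrafilter.of_le F
  have hmemS : ∀ p ∈ I, S p ∈ (U : Filter ℕ) := fun p hp =>
    hUF (Filter.mem_iInf_of_mem ⟨p, hp⟩ (Filter.mem_principal_self _))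
  have hex : ∀ a : ℕ → B, ∃ x, Filter.Tendsto (fun n => lam (a n)) (U : Filter ℕ) (nhds x) := by
    intro a
    obtain ⟨x, _, hx2⟩ := (isCompact_Icc (a := (0 : ℝ)) (b := 1)).ultrafilter_le_nhds
      (U.map fun n => lam (a n)) (by
        rw [Ultrafilter.coe_map, Filter.le_principal_iff, Filter.mem_map]
        exact Filter.univ_mem' fun n => ⟨hlam0 _, hle1 _⟩)
    rw [Ultrafilter.coe_map] at hx2
    exact ⟨x, hx2⟩
  set μT : (ℕ → B) → ℝ := fun a => Filter.limUnder (U : Filter ℕ) (fun n => lam (a n)) with hμT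
  have htend : ∀ a, Filter.Tendsto (fun n => lam (a n)) (U : Filter ℕ) (nhds (μT a)) :=
    fun a => tendsto_nhds_limUnder (hex a)
  refine ⟨μT, ?_, ?_, ?_, ?_⟩
  · intro a _
    exact ge_of_tendsto' (htend a) (fun n => hlam0 _)
  · have h2 : μT ⊤ = lam (⊤ : B) :=
      tendsto_nhds_unique (htend ⊤)
        (tendsto_const_nhds : Filter.Tendsto (fun _ : ℕ => lam (⊤ : B)) _ _)
    rw [h2, hlam1]
  · intro a _ a' _ h
    refine tendsto_nhds_unique (htend (a ⊔ a')) ?_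
    have h1 : ∀ n, lam ((a ⊔ a') n) = lam (a n) + lam (a' n) := by
      intro n
      rw [Pi.sup_apply]
      refine hlamadd _ _ ?_
      have := congrFun h n
      simpa [Pi.inf_apply] using this
    exact (((htend a).add (htend a')).congr fun n => (h1 n).symm)
  · intro r hr
    constructor
    · intro hrT
      have hpI : ((r, (∅ : Finset B)) : Finset B × Finset B) ∈ I := ⟨hrT, by simp⟩
      have hmem := hmemS _ hpI
      refine tendsto_nhds_unique (htend (r.inf G)) ?_
      refine Filter.Tendsto.congr' ?_
        (tendsto_const_nhds : Filter.Tendsto (fun _ : ℕ => lam (r.inf id)) _ _)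
      filter_upwards [hmem] with n hn
      have : (r.inf G) n = r.inf id := by
        rw [Finset.inf_apply]
        exact Finset.inf_congr rfl fun b hb =>
          show G b n = id b from (hG b n).1 (hn.1 b hb)
      rw [this]
    · intro hrT
      obtain ⟨b0, hb0r, hb0T⟩ : ∃ b0 ∈ r, b0 ∉ T := by
        by_contra h
        push_neg at h
        exact hrT fun b hb => h b (by exact_mod_cast hb)
      have hb0ne : b0 ≠ ⊥ := hr (by exact_mod_cast hb0r)
      have hpI : (((∅ : Finset B), ({b0} : Finset B)) : Finset B × Finset B) ∈ I := by
        constructor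
        · simp
        · intro b hb
          rw [Finset.mem_singleton] at hb
          subst hb
          exact ⟨hb0T, hb0ne⟩
      have hmem := hmemS _ hpI
      refine tendsto_nhds_unique (htend (r.inf G)) ?_
      refine Filter.Tendsto.congr' ?_
        (tendsto_const_nhds : Filter.Tendsto (fun _ : ℕ => (0 : ℝ)) _ _)
      filter_upwards [hmem] with n hn
      have hnN : n ∉ N b0 := hn.2 b0 (Finset.mem_singleton_self b0)
      have hGb : G b0 n = ⊥ := (hG b0 n).2 hnN
      have : (r.inf G) n = ⊥ := by
        rw [Finset.inf_apply]
        refine le_bot_iff.mp ?_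
        calc r.inf (fun b => G b n) ≤ G b0 n := Finset.inf_le hb0r
        _ = ⊥ := hGb
      rw [this, hbot]
end
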